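/- The canonical model M is terminal in the category of saturated Kripke structures: for every saturated Kripke structure X there exists exactly one Kripke homomorphism from X to M, namely the map sending x ∈ X to its theory ⟦x⟧ := {φ | x ⊨ φ}. -/

import Mathlib

set_option linter.unnecessarySeqFocus false
set_option linter.unreachableTactic false
set_option linter.unusedTactic false


/-- Modal formulas over a set `Φ` of atomic propositions. -/
inductive ModalFormula (Φ : Type*) : Type _ where
  | atom : Φ → ModalFormula Φ
  | top  : ModalFormula Φ
  | bot  : ModalFormula Φ
  | neg  : ModalFormula Φ → ModalFormula Φ
  | and  : ModalFormula Φ → ModalFormula Φ → ModalFormula Φ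
  | or   : ModalFormula Φ → ModalFormula Φ → ModalFormula Φ
  | box  : ModalFormula Φ → ModalFormula Φ

/-- `◇φ := ¬□¬φ`. -/
def ModalFormula.dia {Φ : Type*} (φ : ModalFormula Φ) : ModalFormula Φ :=
  .neg (.box (.neg φ))

/-- A Kripke structure on state set `X`: a transition relation and a valuation. -/
structure KripkeStructure (Φ X : Type*) where
  R : X → X → Prop
  v : X → Set Φ

/-- Satisfaction `x ⊨ φ`. -/
def Satisfies {Φ X : Type*} (M : KripkeStructure Φ X) : X → ModalFormula Φ → Prop
  | x, .atom p  => p ∈ M.v x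
  | _, .top     => True
  | _, .bot     => False
  | x, .neg φ   => ¬ Satisfies M x φ
  | x, .and φ ψ => Satisfies M x φ ∧ Satisfies M x ψ
  | x, .or φ ψ  => Satisfies M x φ ∨ Satisfies M x ψ
  | x, .box φ   => ∀ y, M.R x y → Satisfies M y φ

/-- `B` is a bisimulation between `M` and `N`. -/
def IsBisimulation {Φ X Y : Type*} (M : KripkeStructure Φ X) (N : KripkeStructure Φ Y)
    (B : X → Y → Prop) : Prop :=
  ∀ x y, B x y →
    M.v x = N.v y ∧
    (∀ x', M.R x x' → ∃ y', N.R y y' ∧ B x' y') ∧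
    (∀ y', N.R y y' → ∃ x', M.R x x' ∧ B x' y')

/-- `x ∼ y` : there is a bisimulation relating `x` and `y`. -/
def Bisimilar {Φ X Y : Type*} (M : KripkeStructure Φ X) (N : KripkeStructure Φ Y)
    (x : X) (y : Y) : Prop :=
  ∃ B : X → Y → Prop, IsBisimulation M N B ∧ B x y

/-- `x ≈ y` : logical equivalence. -/
def LogEquiv {Φ X Y : Type*} (M : KripkeStructure Φ X) (N : KripkeStructure Φ Y)
    (x : X) (y : Y) : Prop :=
  ∀ φ : ModalFormula Φ, Satisfies M x φ ↔ Satisfies N y φ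

/-- A Kripke homomorphism: a map whose graph is a bisimulation. -/
def IsKripkeHom {Φ X Y : Type*} (M : KripkeStructure Φ X) (N : KripkeStructure Φ Y)
    (f : X → Y) : Prop :=
  IsBisimulation M N (fun x y => y = f x)

/-- `x` is m-saturated: whenever every finite subset of `S` is satisfied at some
successor of `x`, some successor of `x` satisfies all of `S`. -/
def MSaturated {Φ X : Type*} (M : KripkeStructure Φ X) (x : X) : Prop :=
  ∀ S : Set (ModalFormula Φ),
    (∀ S₀ ⊆ S, S₀.Finite → ∃ y, M.R x y ∧ ∀ φ ∈ S₀, Satisfies M y φ) →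
    ∃ y, M.R x y ∧ ∀ φ ∈ S, Satisfies M y φ

/-- A Kripke structure is saturated if every state is m-saturated. -/
def Saturated {Φ X : Type*} (M : KripkeStructure Φ X) : Prop :=
  ∀ x : X, MSaturated M x

/-- `φ → ψ` abbreviates `¬φ ∨ ψ`. -/
def ModalFormula.impl {Φ : Type*} (φ ψ : ModalFormula Φ) : ModalFormula Φ :=
  .or (.neg φ) ψ

/-- Propositional evaluation of a modal formula: the boolean connectives are
interpreted classically were atoms and boxed formulas get their truth value
from the assignment `w`. -/
def PropEval {Φ : Type*} (w : ModalFormula Φ → Prop) : ModalFormula Φ → Prop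
  | .atom p  => w (.atom p)
  | .top     => True
  | .bot     => False
  | .neg φ   => ¬ PropEval w φ
  | .and φ ψ => PropEval w φ ∧ PropEval w ψ
  | .or φ ψ  => PropEval w φ ∨ PropEval w ψ
  | .box φ   => w (.box φ)

/-- A propositional tautology: true under every assignment of truth values to
atoms and boxed formulas. -/
def IsPropTautology {Φ : Type*} (φ : ModalFormula Φ) : Prop :=
  ∀ w : ModalFormula Φ → Prop, PropEval w φ

/-- Derivability in the minimal normal modal logic K: all propositional
tautologies, the axiom `□(φ→ψ) → (□φ→□ψ)`, modus ponens and necessitation. -/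
inductive Deriv {Φ : Type*} : ModalFormula Φ → Prop where
  | taut {φ} : IsPropTautology φ → Deriv φ
  | axK (φ ψ : ModalFormula Φ) :
      Deriv (ModalFormula.impl (.box (ModalFormula.impl φ ψ))
        (ModalFormula.impl (.box φ) (.box ψ)))
  | mp {φ ψ} : Deriv (ModalFormula.impl φ ψ) → Deriv φ → Deriv ψ
  | nec {φ} : Deriv φ → Deriv (.box φ)

/-- Conjunction of a finite list of formulas. -/
def listConj {Φ : Type*} (L : List (ModalFormula Φ)) : ModalFormula Φ :=
  L.foldr .and .top

/-- `u` is consistent if no finite subset of `u` derives `⊥`. -/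
def Consistent {Φ : Type*} (u : Set (ModalFormula Φ)) : Prop :=
  ∀ L : List (ModalFormula Φ), (∀ φ ∈ L, φ ∈ u) →
    ¬ Deriv (ModalFormula.impl (listConj L) .bot)

/-- `u` is maximally consistent. -/
def MaxConsistent {Φ : Type*} (u : Set (ModalFormula Φ)) : Prop :=
  Consistent u ∧ ∀ φ : ModalFormula Φ, φ ∈ u ∨ ModalFormula.neg φ ∈ u

/-- The states of the canonical model: maximally consistent sets. -/
def CanonicalState (Φ : Type*) : Type _ :=
  {u : Set (ModalFormula Φ) // MaxConsistent u}

/-- The canonical model: `u → w` iff `□φ ∈ u` implies `φ ∈ w`, and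
`v(u) = u ∩ Φ`. -/
def CanonicalModel (Φ : Type*) : KripkeStructure Φ (CanonicalState Φ) where
  R u w := ∀ φ : ModalFormula Φ, ModalFormula.box φ ∈ u.1 → φ ∈ w.1
  v u := {p : Φ | ModalFormula.atom p ∈ u.1}


section Aux

open Classical

variable {Φ : Type u} {X : Type v}

lemma listConj_nil : listConj ([] : List (ModalFormula Φ)) = ModalFormula.top := rfl
lemma listConj_cons (a : ModalFormula Φ) (L : List (ModalFormula Φ)) :
    listConj (a :: L) = ModalFormula.and a (listConj L) := rfl

lemma propEval_listConj (w : ModalFormula Φ → Prop) (L : List (ModalFormula Φ)) :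
    PropEval w (listConj L) ↔ ∀ φ ∈ L, PropEval w φ := by
  induction L with
  | nil => rw [listConj_nil]; simp [PropEval]
  | cons a L ih => rw [listConj_cons]; simp only [PropEval, ih, List.forall_mem_cons]

lemma satisfies_listConj (M : KripkeStructure Φ X) (x : X) (L : List (ModalFormula Φ)) :
    Satisfies M x (listConj L) ↔ ∀ φ ∈ L, Satisfies M x φ := by
  induction L with
  | nil => rw [listConj_nil]; simp [Satisfies]
  | cons a L ih => rw [listConj_cons]; simp only [Satisfies, ih, List.forall_mem_cons]

lemma propEval_satisfies (M : KripkeStructure Φ X) (x : X) (φ : ModalFormula Φ) :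
    PropEval (Satisfies M x) φ ↔ Satisfies M x φ := by
  induction φ with
  | atom p => exact Iff.rfl
  | top => exact Iff.rfl
  | bot => exact Iff.rfl
  | neg φ ih => simp only [PropEval, Satisfies, ih]
  | and φ ψ ih1 ih2 => simp only [PropEval, Satisfies, ih1, ih2]
  | or φ ψ ih1 ih2 => simp only [PropEval, Satisfies, ih1, ih2]
  | box φ ih => exact Iff.rfl

lemma satisfies_impl (M : KripkeStructure Φ X) (x : X) (φ ψ : ModalFormula Φ) :
    Satisfies M x (ModalFormula.impl φ ψ) ↔ (Satisfies M x φ → Satisfies M x ψ) := by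
  simp only [ModalFormula.impl, Satisfies]; tauto

lemma soundness {φ : ModalFormula Φ} (h : Deriv φ) (M : KripkeStructure Φ X) (x : X) :
    Satisfies M x φ := by
  induction h generalizing x with
  | taut h => exact (propEval_satisfies M x _).1 (h _)
  | axK φ ψ =>
      simp only [satisfies_impl]
      intro h1 h2 y hy
      exact (satisfies_impl M y φ ψ).1 (h1 y hy) (h2 y hy)
  | mp h1 h2 ih1 ih2 => exact (satisfies_impl M x _ _).1 (ih1 x) (ih2 x)
  | nec h ih => intro y _; exact ih y

lemma propEval_impl (w : ModalFormula Φ → Prop) (φ ψ : ModalFormula Φ) :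
    PropEval w (ModalFormula.impl φ ψ) ↔ (PropEval w φ → PropEval w ψ) := by
  simp only [ModalFormula.impl, PropEval]; tauto

/-- Tautological consequence. -/
lemma Deriv.tc {φ ψ : ModalFormula Φ} (h : Deriv φ)
    (ht : IsPropTautology (ModalFormula.impl φ ψ)) : Deriv ψ :=
  Deriv.mp (Deriv.taut ht) h

/-- Closure of maximal consistent sets under derivable consequence from
finitely many members. -/
lemma mcs_mem {u : Set (ModalFormula Φ)} (hu : MaxConsistent u)
    {L : List (ModalFormula Φ)} (hL : ∀ ψ ∈ L, ψ ∈ u) {χ : ModalFormula Φ}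
    (h : Deriv (ModalFormula.impl (listConj L) χ)) : χ ∈ u := by
  by_contra hχ
  rcases hu.2 χ with hc | hc
  · exact hχ hc
  · refine hu.1 (L ++ [ModalFormula.neg χ]) ?_ ?_
    · intro ψ hψ
      rcases List.mem_append.1 hψ with h' | h'
      · exact hL ψ h'
      · simp at h'; subst h'; exact hc
    · refine h.tc ?_
      intro w
      simp only [propEval_impl, propEval_listConj]
      intro h1 h2
      have hχw : PropEval w χ := h1 (fun ψ hψ => h2 ψ (List.mem_append.2 (Or.inl hψ)))
      have hn : PropEval w (ModalFormula.neg χ) :=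
        h2 _ (List.mem_append.2 (Or.inr (by simp)))
      exact (hn hχw).elim

lemma mcs_deriv_mem {u : Set (ModalFormula Φ)} (hu : MaxConsistent u)
    {χ : ModalFormula Φ} (h : Deriv χ) : χ ∈ u := by
  refine mcs_mem hu (L := []) (by simp) (h.tc ?_)
  intro w
  simp only [ModalFormula.impl, PropEval, listConj_nil] <;> tauto

lemma mcs_not_mem_iff {u : Set (ModalFormula Φ)} (hu : MaxConsistent u)
    (φ : ModalFormula Φ) : φ ∉ u ↔ ModalFormula.neg φ ∈ u := by
  constructor
  · intro h; rcases hu.2 φ with h' | h'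
    · exact (h h').elim
    · exact h'
  · intro h hφ
    refine hu.1 [φ, ModalFormula.neg φ] ?_ ?_
    · intro ψ hψ; simp at hψ; rcases hψ with h' | h' <;> subst h' <;> assumption
    · refine Deriv.taut ?_
      intro w
      simp [ModalFormula.impl, PropEval, propEval_listConj] <;> tauto

lemma mcs_mem_mp {u : Set (ModalFormula Φ)} (hu : MaxConsistent u)
    {φ ψ : ModalFormula Φ} (h1 : ModalFormula.impl φ ψ ∈ u) (h2 : φ ∈ u) : ψ ∈ u := by
  refine mcs_mem hu (L := [ModalFormula.impl φ ψ, φ]) ?_ (Deriv.taut ?_)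
  · intro χ hχ; simp at hχ; rcases hχ with h' | h' <;> subst h' <;> assumption
  · intro w
    simp [ModalFormula.impl, PropEval, propEval_listConj] <;> tauto

/-- `conj (map box L) → □(conj L)` in `K`. -/
lemma deriv_box_conj (L : List (ModalFormula Φ)) :
    Deriv (ModalFormula.impl (listConj (L.map ModalFormula.box))
      (ModalFormula.box (listConj L))) := by
  induction L with
  | nil =>
      have h1 : Deriv (ModalFormula.box (listConj ([] : List (ModalFormula Φ)))) :=
        Deriv.nec (Deriv.taut (by intro w; rw [listConj_nil]; exact trivial))
      refine h1.tc ?_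
      intro w
      simp only [ModalFormula.impl, PropEval] <;> tauto
  | cons a L ih =>
      set C := listConj (L.map ModalFormula.box) with hC
      set c := listConj L with hc
      have h1 : Deriv (ModalFormula.box (ModalFormula.impl a
          (ModalFormula.impl c (ModalFormula.and a c)))) :=
        Deriv.nec (Deriv.taut (by
          intro w; simp only [ModalFormula.impl, PropEval] <;> tauto))
      have h2 : Deriv (ModalFormula.impl (ModalFormula.box a)
          (ModalFormula.box (ModalFormula.impl c (ModalFormula.and a c)))) :=
        Deriv.mp (Deriv.axK _ _) h1
      have h3 : Deriv (ModalFormula.impl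
          (ModalFormula.box (ModalFormula.impl c (ModalFormula.and a c)))
          (ModalFormula.impl (ModalFormula.box c)
            (ModalFormula.box (ModalFormula.and a c)))) :=
        Deriv.axK _ _
      have h4 : Deriv (ModalFormula.impl (ModalFormula.box a)
          (ModalFormula.impl (ModalFormula.box c)
            (ModalFormula.box (ModalFormula.and a c)))) := by
        refine Deriv.mp (h2.tc ?_) h3
        intro w; simp only [ModalFormula.impl, PropEval] <;> tauto
      show Deriv (ModalFormula.impl (ModalFormula.and (ModalFormula.box a) C)
        (ModalFormula.box (ModalFormula.and a c)))
      refine Deriv.mp (ih.tc ?_) h4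
      intro w; simp only [ModalFormula.impl, PropEval] <;> tauto

/-- The `K` rule: from `conj L → φ` infer `conj (map box L) → □φ`. -/
lemma deriv_K {L : List (ModalFormula Φ)} {φ : ModalFormula Φ}
    (h : Deriv (ModalFormula.impl (listConj L) φ)) :
    Deriv (ModalFormula.impl (listConj (L.map ModalFormula.box)) (ModalFormula.box φ)) := by
  have h1 : Deriv (ModalFormula.impl (ModalFormula.box (listConj L)) (ModalFormula.box φ)) :=
    Deriv.mp (Deriv.axK _ _) (Deriv.nec h)
  refine Deriv.mp ((deriv_box_conj L).tc ?_) h1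
  intro w; simp only [ModalFormula.impl, PropEval] <;> tauto

/-- Adding one of `φ`, `¬φ` to a consistent set keeps it consistent. -/
lemma consistent_insert_or {m : Set (ModalFormula Φ)} (hm : Consistent m)
    (φ : ModalFormula Φ) :
    Consistent (insert φ m) ∨ Consistent (insert (ModalFormula.neg φ) m) := by
  by_contra h
  push_neg at h
  obtain ⟨h1, h2⟩ := h
  simp only [Consistent, not_forall, not_not] at h1 h2
  obtain ⟨L1, hL1, hd1⟩ := h1
  obtain ⟨L2, hL2, hd2⟩ := h2
  classical
  set L1' := L1.filter (fun ψ => decide (ψ ∈ m)) with hL1'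
  set L2' := L2.filter (fun ψ => decide (ψ ∈ m)) with hL2'
  refine hm (L1' ++ L2') ?_ ?_
  · intro ψ hψ
    rcases List.mem_append.1 hψ with h' | h' <;>
      · have := List.of_mem_filter h'
        simpa using this
  · refine Deriv.mp (hd1.tc ?_) hd2
    intro w
    simp only [propEval_impl, propEval_listConj]
    intro hA hB hAB
    by_cases hφ : PropEval w φ
    · refine hA ?_
      intro ψ hψ
      rcases hL1 ψ hψ with h' | h'
      · subst h'; exact hφ
      · exact hAB ψ (List.mem_append.2 (Or.inl (List.mem_filter.2 ⟨hψ, by simpa using h'⟩)))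
    · refine hB ?_
      intro ψ hψ
      rcases hL2 ψ hψ with h' | h'
      · subst h'; exact hφ
      · exact hAB ψ (List.mem_append.2 (Or.inr (List.mem_filter.2 ⟨hψ, by simpa using h'⟩)))

/-- Lindenbaum's lemma. -/
lemma lindenbaum {S : Set (ModalFormula Φ)} (hS : Consistent S) :
    ∃ u : CanonicalState Φ, S ⊆ u.1 := by
  have hchainub : ∀ c ⊆ {v : Set (ModalFormula Φ) | Consistent v},
      IsChain (· ⊆ ·) c → c.Nonempty →
      ∃ ub ∈ {v : Set (ModalFormula Φ) | Consistent v}, ∀ s ∈ c, s ⊆ ub := by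
    intro c hc hchain hne
    have key : ∀ L : List (ModalFormula Φ), (∀ φ ∈ L, φ ∈ ⋃₀ c) →
        ∃ t ∈ c, ∀ ψ ∈ L, ψ ∈ t := by
      intro L
      induction L with
      | nil =>
          intro _
          obtain ⟨t, ht⟩ := hne
          exact ⟨t, ht, by simp⟩
      | cons a L ih =>
          intro hL
          obtain ⟨t, htc, ht⟩ := ih (fun ψ hψ => hL ψ (List.mem_cons_of_mem _ hψ))
          obtain ⟨s, hsc, has⟩ := hL a List.mem_cons_self
          rcases hchain.total hsc htc with h' | h'
          · refine ⟨t, htc, fun ψ hψ => ?_⟩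
            rcases List.mem_cons.1 hψ with h'' | h''
            · subst h''; exact h' has
            · exact ht ψ h''
          · refine ⟨s, hsc, fun ψ hψ => ?_⟩
            rcases List.mem_cons.1 hψ with h'' | h''
            · subst h''; exact has
            · exact h' (ht ψ h'')
    refine ⟨⋃₀ c, fun L hL => ?_, fun s hs => Set.subset_sUnion_of_mem hs⟩
    obtain ⟨t, htc, ht⟩ := key L hL
    exact hc htc L ht
  obtain ⟨m, hSm, hmem, hmax⟩ :=
    zorn_subset_nonempty {v : Set (ModalFormula Φ) | Consistent v} hchainub S hS
  refine ⟨⟨m, hmem, fun φ => ?_⟩, hSm⟩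
  rcases consistent_insert_or hmem φ with h | h
  · left
    have : insert φ m ⊆ m := hmax h (Set.subset_insert _ _)
    exact this (Set.mem_insert _ _)
  · right
    have : insert (ModalFormula.neg φ) m ⊆ m := hmax h (Set.subset_insert _ _)
    exact this (Set.mem_insert _ _)

/-- The existence lemma for the canonical model. -/
lemma exists_canonical_succ (u : CanonicalState Φ) {φ : ModalFormula Φ}
    (h : ModalFormula.box φ ∉ u.1) :
    ∃ w : CanonicalState Φ, (CanonicalModel Φ).R u w ∧ ModalFormula.neg φ ∈ w.1 := by
  classical
  set S : Set (ModalFormula Φ) :=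
    insert (ModalFormula.neg φ) {ψ | ModalFormula.box ψ ∈ u.1} with hSdef
  have hS : Consistent S := by
    intro L hL hd
    set L' := L.filter (fun ψ => decide (ModalFormula.box ψ ∈ u.1)) with hL'def
    have hL' : ∀ ψ ∈ L, ψ ∈ L' ∨ ψ = ModalFormula.neg φ := by
      intro ψ hψ
      rcases hL ψ hψ with h' | h'
      · right; exact h'
      · left; exact List.mem_filter.2 ⟨hψ, by simpa using h'⟩
    have hstep : Deriv (ModalFormula.impl (listConj L') φ) := by
      refine hd.tc ?_
      intro w
      simp only [propEval_impl, propEval_listConj]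
      intro hLbot hL'all
      by_contra hφ
      refine hLbot ?_
      intro ψ hψ
      rcases hL' ψ hψ with h' | h'
      · exact hL'all ψ h'
      · subst h'; exact hφ
    have hbox : ModalFormula.box φ ∈ u.1 := by
      refine mcs_mem u.2 (L := L'.map ModalFormula.box) ?_ (deriv_K hstep)
      intro χ hχ
      obtain ⟨ψ, hψ, rfl⟩ := List.mem_map.1 hχ
      have := List.of_mem_filter hψ
      simpa using this
    exact h hbox
  obtain ⟨w, hw⟩ := lindenbaum hS
  refine ⟨w, ?_, hw (Set.mem_insert _ _)⟩
  intro ψ hψ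
  exact hw (Set.mem_insert_of_mem _ hψ)

/-- The truth lemma along a bisimulation into the canonical model. -/
lemma bisim_truth (M : KripkeStructure Φ X) {B : X → CanonicalState Φ → Prop}
    (hB : IsBisimulation M (CanonicalModel Φ) B) (φ : ModalFormula Φ) :
    ∀ x u, B x u → (Satisfies M x φ ↔ φ ∈ u.1) := by
  induction φ with
  | atom p =>
      intro x u hxu
      have hv := (hB x u hxu).1
      constructor
      · intro h
        have : p ∈ (CanonicalModel Φ).v u := hv ▸ h
        exact this
      · intro h
        show p ∈ M.v x
        rw [hv]; exact h
  | top =>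
      intro x u hxu
      simp only [Satisfies, true_iff]
      exact mcs_deriv_mem u.2 (Deriv.taut (by intro w; exact trivial))
  | bot =>
      intro x u hxu
      simp only [Satisfies, false_iff]
      intro h
      refine u.2.1 [ModalFormula.bot] (by simpa using h) (Deriv.taut ?_)
      intro w
      simp [ModalFormula.impl, PropEval, propEval_listConj] <;> tauto
  | neg φ ih =>
      intro x u hxu
      have := ih x u hxu
      simp only [Satisfies, this]
      exact (mcs_not_mem_iff u.2 φ)
  | and φ ψ ih1 ih2 =>
      intro x u hxu
      simp only [Satisfies, ih1 x u hxu, ih2 x u hxu]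
      constructor
      · rintro ⟨h1, h2⟩
        have himp : ModalFormula.impl ψ (ModalFormula.and φ ψ) ∈ u.1 :=
          mcs_mem u.2 (L := [φ]) (by simpa using h1) (Deriv.taut (by
            intro w; simp [ModalFormula.impl, PropEval, propEval_listConj] <;> tauto))
        exact mcs_mem_mp u.2 himp h2
      · intro h
        constructor
        · exact mcs_mem u.2 (L := [ModalFormula.and φ ψ]) (by simpa using h)
            (Deriv.taut (by
              intro w; simp [ModalFormula.impl, PropEval, propEval_listConj] <;> tauto))
        · exact mcs_mem u.2 (L := [ModalFormula.and φ ψ]) (by simpa using h)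
            (Deriv.taut (by
              intro w; simp [ModalFormula.impl, PropEval, propEval_listConj] <;> tauto))
  | or φ ψ ih1 ih2 =>
      intro x u hxu
      simp only [Satisfies, ih1 x u hxu, ih2 x u hxu]
      constructor
      · rintro (h | h)
        · exact mcs_mem u.2 (L := [φ]) (by simpa using h) (Deriv.taut (by
            intro w; simp [ModalFormula.impl, PropEval, propEval_listConj] <;> tauto))
        · exact mcs_mem u.2 (L := [ψ]) (by simpa using h) (Deriv.taut (by
            intro w; simp [ModalFormula.impl, PropEval, propEval_listConj] <;> tauto))
      · intro h
        by_contra hc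
        push_neg at hc
        obtain ⟨h1, h2⟩ := hc
        have hn1 := (mcs_not_mem_iff u.2 φ).1 h1
        have hn2 := (mcs_not_mem_iff u.2 ψ).1 h2
        have : ModalFormula.neg (ModalFormula.or φ ψ) ∈ u.1 := by
          refine mcs_mem u.2 (L := [ModalFormula.neg φ, ModalFormula.neg ψ]) ?_
            (Deriv.taut ?_)
          · intro χ hχ; simp at hχ; rcases hχ with h' | h' <;> subst h' <;> assumption
          · intro w; simp [ModalFormula.impl, PropEval, propEval_listConj] <;> tauto
        exact (mcs_not_mem_iff u.2 _).2 this h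
  | box φ ih =>
      intro x u hxu
      constructor
      · intro h
        by_contra hbox
        obtain ⟨w, hRw, hnw⟩ := exists_canonical_succ u hbox
        obtain ⟨x', hRx', hx'w⟩ := (hB x u hxu).2.2 w hRw
        have hs : Satisfies M x' φ := h x' hRx'
        have hmem : φ ∈ w.1 := (ih x' w hx'w).1 hs
        exact (mcs_not_mem_iff w.2 φ).2 hnw hmem
      · intro h y hy
        obtain ⟨w, hRw, hyw⟩ := (hB x u hxu).2.1 y hy
        exact (ih y w hyw).2 (hRw φ h)

/-- The theory of a state is maximally consistent. -/
lemma theory_maxConsistent (M : KripkeStructure Φ X) (x : X) :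
    MaxConsistent {φ : ModalFormula Φ | Satisfies M x φ} := by
  constructor
  · intro L hL hd
    have h1 : Satisfies M x (listConj L) := (satisfies_listConj M x L).2 hL
    have h2 := soundness hd M x
    exact (satisfies_impl M x _ _).1 h2 h1
  · intro φ
    by_cases h : Satisfies M x φ
    · left; exact h
    · right; exact h

/-- The theory map. -/
noncomputable def theoryMap (M : KripkeStructure Φ X) (x : X) : CanonicalState Φ :=
  ⟨{φ : ModalFormula Φ | Satisfies M x φ}, theory_maxConsistent M x⟩

lemma listConj_selfneg_taut (L : List (ModalFormula Φ)) :
    IsPropTautology (ModalFormula.impl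
      (listConj (L ++ [ModalFormula.neg (listConj L)])) ModalFormula.bot) := by
  intro w
  simp only [propEval_impl, propEval_listConj]
  intro h
  have h1 : PropEval w (listConj L) :=
    (propEval_listConj w L).2 (fun ψ hψ => h ψ (List.mem_append.2 (Or.inl hψ)))
  have h2 : PropEval w (ModalFormula.neg (listConj L)) :=
    h _ (List.mem_append.2 (Or.inr (by simp)))
  exact (h2 h1).elim

/-- The theory map is a Kripke homomorphism when `M` is saturated. -/
lemma theoryMap_isHom (M : KripkeStructure Φ X) (hM : Saturated M) :
    IsKripkeHom M (CanonicalModel Φ) (theoryMap M) := by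
  intro x y hy
  subst hy
  refine ⟨?_, ?_, ?_⟩
  · ext p
    constructor
    · intro h; exact h
    · intro h; exact h
  · intro x' hx'
    refine ⟨theoryMap M x', ?_, rfl⟩
    intro φ hφ
    exact hφ x' hx'
  · intro w hw
    have key : ∃ y, M.R x y ∧ ∀ φ ∈ w.1, Satisfies M y φ := by
      refine hM x w.1 ?_
      intro S₀ hS₀ hfin
      obtain ⟨L, hL⟩ : ∃ L : List (ModalFormula Φ), ∀ φ, φ ∈ L ↔ φ ∈ S₀ := by
        refine ⟨hfin.toFinset.toList, fun φ => ?_⟩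
        simp [Set.Finite.mem_toFinset]
      have hdia : ¬ Satisfies M x (ModalFormula.box (ModalFormula.neg (listConj L))) := by
        intro hbox
        have h1 : ModalFormula.neg (listConj L) ∈ w.1 := hw _ hbox
        refine w.2.1 (L ++ [ModalFormula.neg (listConj L)]) ?_
          (Deriv.taut (listConj_selfneg_taut L))
        intro ψ hψ
        rcases List.mem_append.1 hψ with h' | h'
        · exact hS₀ ((hL ψ).1 h')
        · simp at h'; subst h'; exact h1
      have hdia' : ∃ y, M.R x y ∧ Satisfies M y (listConj L) := by
        by_contra hc
        push_neg at hc
        exact hdia (fun y hy hs => hc y hy hs)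
      obtain ⟨y, hRy, hy⟩ := hdia'
      exact ⟨y, hRy, fun φ hφ => (satisfies_listConj M y L).1 hy φ ((hL φ).2 hφ)⟩
    obtain ⟨y, hRy, hy⟩ := key
    refine ⟨y, hRy, ?_⟩
    have heq : (theoryMap M y).1 = w.1 := by
      ext φ
      constructor
      · intro hsy
        by_contra hc
        have := (mcs_not_mem_iff w.2 φ).1 hc
        exact (hy _ this) hsy
      · intro hφ; exact hy φ hφ
    exact Subtype.ext heq.symm

end Aux


/-- The canonical model is terminal among saturated Kripke structures: from
every saturated Kripke structure there is exactly one homomorphism into the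
canonical model, namely the theory map `x ↦ ⟦x⟧ = {φ | x ⊨ φ}`. -/
theorem canonicalModel_terminal {Φ : Type u} {X : Type v}
    (M : KripkeStructure Φ X) (hM : Saturated M) :
    (∃! f : X → CanonicalState Φ, IsKripkeHom M (CanonicalModel Φ) f) ∧
    (∀ f : X → CanonicalState Φ, IsKripkeHom M (CanonicalModel Φ) f →
      ∀ x : X, (f x).1 = {φ : ModalFormula Φ | Satisfies M x φ}) := by
  have key : ∀ f : X → CanonicalState Φ, IsKripkeHom M (CanonicalModel Φ) f →
      ∀ x : X, (f x).1 = {φ : ModalFormula Φ | Satisfies M x φ} := by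
    intro f hf x
    ext φ
    exact (bisim_truth M hf φ x (f x) rfl).symm
  refine ⟨⟨theoryMap M, theoryMap_isHom M hM, ?_⟩, key⟩
  intro g hg
  funext x
  exact Subtype.ext (key g hg x)
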